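/- (Lemma 1) Fix an integer d ≥ 2 and δ ∈ (0, 1/2). Then for all sufficiently large n the following holds: for all integers k, i, j with 0 ≤ k ≤ n/2, 0 ≤ i ≤ k, 0 ≤ j ≤ n − k, i < δ·n and j < δ·n, the quantity |F_{i,j}| := Σ_{ℓ=1}^{d-1} C(i,ℓ)C(k−i, d−ℓ) + Σ_{ℓ=1}^{d-1} C(j,ℓ)C(n−k−j, d−ℓ) + Σ_{ℓ=1}^{d-1} C(i,ℓ)C(n−k−j, d−ℓ) + Σ_{ℓ=1}^{d-1} C(k−i,ℓ)C(j, d−ℓ) satisfies |F_{i,j}| ≥ (i + j) · ((1 − 2δ)^{d-1} / 2^{d-2}) · C(n−1, d−1). -/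

import Mathlib

open Filter

private lemma pow_mid (u v : ℝ) (hu : 0 ≤ u) (hv : 0 ≤ v) (r : ℕ) :
    2 * ((u + v) / 2) ^ r ≤ u ^ r + v ^ r := by
  have h := (convexOn_pow (𝕜 := ℝ) r).2 (Set.mem_Ici.2 hu) (Set.mem_Ici.2 hv)
      (by norm_num : (0:ℝ) ≤ 1/2) (by norm_num : (0:ℝ) ≤ 1/2) (by norm_num)
  simp only [smul_eq_mul] at h
  have e : (u + v) / 2 = 1/2 * u + 1/2 * v := by ring
  rw [e]
  linarith

private lemma pow_diff' (A B : ℝ) (hB : 0 ≤ B) (hBA : B ≤ A) :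
    ∀ r : ℕ, A ^ (r+1) - B ^ (r+1) ≤ (r+1) * (A - B) * A ^ r
  | 0 => by norm_num
  | (r+1) => by
    have ih := pow_diff' A B hB hBA r
    have hA : 0 ≤ A := hB.trans hBA
    have h1 : B ^ (r+1) ≤ A ^ (r+1) := pow_le_pow_left₀ hB hBA (r+1)
    have h2 : A * (A ^ (r+1) - B ^ (r+1)) ≤ A * ((r+1) * (A - B) * A ^ r) :=
      mul_le_mul_of_nonneg_left ih hA
    have h3 : B ^ (r+1) * (A - B) ≤ A ^ (r+1) * (A - B) :=
      mul_le_mul_of_nonneg_right h1 (by linarith)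
    have key : A ^ (r+1+1) - B ^ (r+1+1)
        = A * (A ^ (r+1) - B ^ (r+1)) + B ^ (r+1) * (A - B) := by ring
    rw [key]
    have e : A * ((r+1) * (A - B) * A ^ r) = ((r:ℝ)+1) * (A - B) * A ^ (r+1) := by ring
    rw [e] at h2
    push_cast
    nlinarith [h2, h3]

/-- lower bound for binomial: `c ^ r ≤ r! * C(b, r)` when `0 ≤ c ≤ b - r + 1`. -/
private lemma desc_lower (b r : ℕ) (c : ℝ) (hc : 0 ≤ c) (h : c ≤ (b:ℝ) - r + 1) :
    c ^ r ≤ (r.factorial : ℝ) * (b.choose r : ℝ) := by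
  have h1 : c ≤ ((b + 1 - r : ℕ) : ℝ) := by
    rcases le_or_gt r (b+1) with hle | hlt
    · rw [Nat.cast_sub hle]; push_cast; linarith
    · have : (b:ℝ) + 1 < r := by exact_mod_cast hlt
      linarith
  calc c ^ r ≤ ((b + 1 - r : ℕ) : ℝ) ^ r := pow_le_pow_left₀ hc h1 r
    _ = (((b + 1 - r) ^ r : ℕ) : ℝ) := by push_cast; ring
    _ ≤ ((b.descFactorial r : ℕ) : ℝ) := by
        exact_mod_cast Nat.pow_sub_le_descFactorial b r
    _ = _ := by rw [Nat.descFactorial_eq_factorial_mul_choose]; push_cast; ring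

private lemma choose_upper (n r : ℕ) :
    (r.factorial : ℝ) * (n.choose r : ℝ) ≤ (n:ℝ) ^ r := by
  have h := Nat.descFactorial_le_pow n r
  rw [Nat.descFactorial_eq_factorial_mul_choose] at h
  exact_mod_cast h

/-- Abstract arithmetic core of the per-variable estimate.  Here `W` plays the
role of `(1/2-δ)n`, `D` of `δn`, `x,y` of the two group sizes, `mR` of the flip count,
`A2 ≈ (s+2)! C(a,s+2)`, `B2 ≈ (s+2)! C(b,s+2)`, `B1 ≈ (s+1)! C(b,s+1)`, `C2 ≈ C(m,2)`. -/
private lemma core (s : ℕ) (W D x y mR A2 B2 B1 C2 : ℝ)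
    (hW1 : 2*((s:ℝ)+2)*((s:ℝ)+2) ≤ W)
    (hD1 : ((s:ℝ)+2) * 2^(s+5) ≤ D)
    (hx0 : 0 ≤ x) (hm0 : 0 ≤ mR)
    (hm : mR < D) (hb : W < y) (hab : 2*W + D - mR < x + y)
    (hA2 : ∀ c : ℝ, 0 ≤ c → c ≤ x - ((s:ℝ)+2) + 1 → c^(s+2) ≤ A2)
    (hB2 : ∀ c : ℝ, 0 ≤ c → c ≤ y - ((s:ℝ)+2) + 1 → c^(s+2) ≤ B2)
    (hB1 : ∀ c : ℝ, 0 ≤ c → c ≤ y - ((s:ℝ)+2) + 2 → c^(s+1) ≤ B1)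
    (hC2 : mR * (mR - 1) / 2 ≤ C2)
    (hA20 : 0 ≤ A2) (hC20 : 0 ≤ C2) (hB10 : 0 ≤ B1) :
    2 * mR * W^(s+2) ≤ mR * A2 + mR * B2 + C2 * (((s:ℝ)+2) * B1) := by
  have hs0 : (0:ℝ) ≤ (s:ℝ) := Nat.cast_nonneg s
  have hS0 : (0:ℝ) < (s:ℝ)+2 := by linarith
  have h2s : (1:ℝ) ≤ 2^s := one_le_pow₀ (by norm_num)
  have hSq : 0 ≤ ((s:ℝ)+2-2)*((s:ℝ)+2) := mul_nonneg (by linarith) hS0.le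
  have hW4 : 4*((s:ℝ)+2) ≤ W := by linarith [hW1, hSq, hs0]
  have hW0 : (0:ℝ) < W := by linarith
  have hD32 : 32*((s:ℝ)+2) ≤ D := by
    have e : (2:ℝ)^(s+5) = 32*2^s := by ring
    rw [e] at hD1
    have h1 : 0 ≤ ((s:ℝ)+2) * (2^s - 1) := mul_nonneg hS0.le (by linarith)
    linarith [hD1, h1]
  have hD0 : (0:ℝ) < D := by linarith
  have hP21 : W^(s+2) = W^(s+1)*W := by ring
  have hP10 : (0:ℝ) ≤ W^(s+1) := by positivity
  -- difference of powers estimate, used twice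
  have hpd' : W^(s+2) - (W-((s:ℝ)+2))^(s+2) ≤ ((s:ℝ)+2)*((s:ℝ)+2)*W^(s+1) := by
    have h := pow_diff' W (W-((s:ℝ)+2)) (by linarith) (by linarith) (s+1)
    push_cast at h
    calc W^(s+2) - (W-((s:ℝ)+2))^(s+2)
        ≤ ((s:ℝ)+1+1) * (W - (W-((s:ℝ)+2))) * W^(s+1) := h
      _ = ((s:ℝ)+2)*((s:ℝ)+2)*W^(s+1) := by ring
  rcases lt_or_ge x ((s:ℝ)+2) with hxs | hxs
  · -- Case A : x small, so y is huge
    have hyb : 2*W - ((s:ℝ)+2) < y := by linarith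
    have hc0 : (0:ℝ) ≤ 2*(W - ((s:ℝ)+2)) := by linarith
    have hB2l : (2*(W-((s:ℝ)+2)))^(s+2) ≤ B2 := hB2 _ hc0 (by linarith)
    have hWS2 : W/2 ≤ W - ((s:ℝ)+2)*((s:ℝ)+2) := by linarith
    have hq : W^(s+1) * (W/2) ≤ W^(s+1)*(W - ((s:ℝ)+2)*((s:ℝ)+2)) :=
      mul_le_mul_of_nonneg_left hWS2 hP10
    have hlow : W^(s+1)*(W/2) ≤ (W-((s:ℝ)+2))^(s+2) := by linarith [hpd', hq, hP21]
    have h4 : (4:ℝ) ≤ 2^(s+2) := by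
      have e : (2:ℝ)^(s+2) = 4*2^s := by ring
      rw [e]; linarith
    have hfin : 2*W^(s+2) ≤ (2*(W-((s:ℝ)+2)))^(s+2) := by
      have e2 : (2*(W-((s:ℝ)+2)))^(s+2) = 2^(s+2)*(W-((s:ℝ)+2))^(s+2) := mul_pow _ _ _
      have h5 : 4*(W^(s+1)*(W/2)) ≤ 2^(s+2)*((W-((s:ℝ)+2))^(s+2)) :=
        mul_le_mul h4 hlow (by positivity) (by positivity)
      rw [e2]
      linarith [h5, hP21]
    have hmB : mR*(2*W^(s+2)) ≤ mR*B2 :=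
      mul_le_mul_of_nonneg_left (le_trans hfin hB2l) hm0
    have t1 : (0:ℝ) ≤ mR*A2 := mul_nonneg hm0 hA20
    have t2 : (0:ℝ) ≤ C2*(((s:ℝ)+2)*B1) := mul_nonneg hC20 (mul_nonneg hS0.le hB10)
    linarith [hmB, t1, t2]
  · -- x ≥ s+2
    have hu0 : (0:ℝ) ≤ x - ((s:ℝ)+2) + 1 := by linarith
    have hv0 : (0:ℝ) ≤ y - ((s:ℝ)+2) + 1 := by linarith
    have hA2l : (x - ((s:ℝ)+2) + 1)^(s+2) ≤ A2 := hA2 _ hu0 le_rfl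
    have hB2l : (y - ((s:ℝ)+2) + 1)^(s+2) ≤ B2 := hB2 _ hv0 le_rfl
    have hmid := pow_mid (x - ((s:ℝ)+2) + 1) (y - ((s:ℝ)+2) + 1) hu0 hv0 (s+2)
    rcases le_or_gt mR (D/2) with hms | hms
    · -- Case B : m small, midpoint has extra room
      have hmid2 : W ≤ ((x - ((s:ℝ)+2) + 1) + (y - ((s:ℝ)+2) + 1))/2 := by linarith
      have hpow : W^(s+2) ≤ (((x - ((s:ℝ)+2) + 1) + (y - ((s:ℝ)+2) + 1))/2)^(s+2) :=
        pow_le_pow_left₀ hW0.le hmid2 _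
      have hsum : 2*W^(s+2) ≤ A2 + B2 := by linarith [hmid, hpow, hA2l, hB2l]
      have hmB : mR*(2*W^(s+2)) ≤ mR*(A2+B2) := mul_le_mul_of_nonneg_left hsum hm0
      have t2 : (0:ℝ) ≤ C2*(((s:ℝ)+2)*B1) := mul_nonneg hC20 (mul_nonneg hS0.le hB10)
      linarith [hmB, t2]
    · -- Case C : m large, use the choose-2 boost
      have hmid2 : W - ((s:ℝ)+2) ≤ ((x - ((s:ℝ)+2) + 1) + (y - ((s:ℝ)+2) + 1))/2 := by
        linarith
      have hWS0 : (0:ℝ) ≤ W - ((s:ℝ)+2) := by linarith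
      have hpow : (W-((s:ℝ)+2))^(s+2)
          ≤ (((x - ((s:ℝ)+2) + 1) + (y - ((s:ℝ)+2) + 1))/2)^(s+2) :=
        pow_le_pow_left₀ hWS0 hmid2 _
      have hmain : 2*(W^(s+2) - ((s:ℝ)+2)*((s:ℝ)+2)*W^(s+1)) ≤ A2 + B2 := by
        linarith [hmid, hpow, hA2l, hB2l, hpd']
      have hC2m : mR*(D/8) ≤ C2 := by
        have h1 : D/4 ≤ mR - 1 := by linarith
        have h2 : mR*(D/4) ≤ mR*(mR-1) := mul_le_mul_of_nonneg_left h1 hm0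
        linarith [hC2, h2]
      have hB1l : (W/2)^(s+1) ≤ B1 := hB1 (W/2) (by linarith) (by linarith)
      have hQ : (2:ℝ)^(s+1) * (W/2)^(s+1) = W^(s+1) := by
        rw [← mul_pow]
        have e : (2:ℝ)*(W/2) = W := by ring
        rw [e]
      have hD8 : 2*((s:ℝ)+2)*2^(s+1) ≤ D/8 := by
        have e : ((s:ℝ)+2) * 2^(s+5) = 8 * (2*((s:ℝ)+2)*2^(s+1)) := by ring
        rw [e] at hD1
        have hp : (0:ℝ) ≤ 2*((s:ℝ)+2)*2^(s+1) := by positivity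
        linarith
      have hboost : mR*(2*((s:ℝ)+2)*((s:ℝ)+2)*W^(s+1)) ≤ C2*(((s:ℝ)+2)*B1) := by
        calc mR*(2*((s:ℝ)+2)*((s:ℝ)+2)*W^(s+1))
            = (mR*(2*((s:ℝ)+2)*2^(s+1))) * (((s:ℝ)+2)*(W/2)^(s+1)) := by
              rw [← hQ]; ring
          _ ≤ (mR*(D/8)) * (((s:ℝ)+2)*(W/2)^(s+1)) :=
              mul_le_mul_of_nonneg_right
                (mul_le_mul_of_nonneg_left hD8 hm0) (by positivity)
          _ ≤ C2 * (((s:ℝ)+2)*(W/2)^(s+1)) :=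
              mul_le_mul_of_nonneg_right hC2m (by positivity)
          _ ≤ C2 * (((s:ℝ)+2)*B1) :=
              mul_le_mul_of_nonneg_left
                (mul_le_mul_of_nonneg_left hB1l hS0.le) hC20
      have hmR : mR*(2*(W^(s+2) - ((s:ℝ)+2)*((s:ℝ)+2)*W^(s+1))) ≤ mR*(A2+B2) :=
        mul_le_mul_of_nonneg_left hmain hm0
      linarith [hboost, hmR]

/-- The per-variable claim, in terms of binomial coefficients. -/
private lemma claimC (r : ℕ) (hr : 2 ≤ r) (δ : ℝ) (hδ0 : 0 < δ) (hδ2 : δ < 1/2)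
    (n a b m : ℕ)
    (hn1 : 2*(r:ℝ)*r ≤ (1/2 - δ) * n)
    (hn2 : (r:ℝ) * 2^(r+3) ≤ δ * n)
    (hm : (m:ℝ) < δ * n)
    (hb : (1/2 - δ) * n < (b:ℝ))
    (hab : (1 - δ) * n - m < (a:ℝ) + b) :
    2 * m * ((1/2 - δ)^r) * (((n-1).choose r : ℕ) : ℝ)
      ≤ m * (a.choose r : ℝ) + m * (b.choose r : ℝ)
        + (m.choose 2 : ℝ) * (b.choose (r-1) : ℝ) := by
  obtain ⟨s, rfl⟩ : ∃ s, r = s + 2 := ⟨r - 2, by omega⟩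
  have e1 : s + 2 - 1 = s + 1 := by omega
  rw [e1]
  push_cast at hn1 hn2
  have hα0 : (0:ℝ) < 1/2 - δ := by linarith
  have hFr : (0:ℝ) < ((s+2).factorial : ℝ) := by positivity
  have hexp : s + 2 + 3 = s + 5 := by omega
  rw [hexp] at hn2
  have hab' : 2*((1/2-δ)*n) + δ*n - (m:ℝ) < (a:ℝ) + b := by
    have e : 2*((1/2-δ)*(n:ℝ)) + δ*n = (1-δ)*n := by ring
    linarith
  have hcore := core s ((1/2-δ)*n) (δ*n) (a:ℝ) (b:ℝ) (m:ℝ)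
      (((s+2).factorial:ℝ) * (a.choose (s+2):ℝ))
      (((s+2).factorial:ℝ) * (b.choose (s+2):ℝ))
      (((s+1).factorial:ℝ) * (b.choose (s+1):ℝ))
      ((m.choose 2:ℝ))
      hn1 hn2 (Nat.cast_nonneg a) (Nat.cast_nonneg m) hm hb hab'
      (fun c hc hcx => desc_lower a (s+2) c hc (by push_cast; linarith [hcx]))
      (fun c hc hcy => desc_lower b (s+2) c hc (by push_cast; linarith [hcy]))
      (fun c hc hcy => desc_lower b (s+1) c hc (by push_cast; linarith [hcy]))
      (le_of_eq (by rw [Nat.cast_choose_two]))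
      (by positivity) (Nat.cast_nonneg _) (by positivity)
  -- upper bound for the RHS binomial coefficient
  have hT : ((1/2-δ))^(s+2) * (((s+2).factorial : ℝ) * (((n-1).choose (s+2) : ℕ) : ℝ))
      ≤ ((1/2-δ)*n)^(s+2) := by
    have h1 : ((s+2).factorial : ℝ) * (((n-1).choose (s+2) : ℕ) : ℝ)
        ≤ ((n-1:ℕ):ℝ)^(s+2) := choose_upper (n-1) (s+2)
    have h2 : ((n-1:ℕ):ℝ)^(s+2) ≤ (n:ℝ)^(s+2) := by
      apply pow_le_pow_left₀ (Nat.cast_nonneg _)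
      exact_mod_cast Nat.sub_le n 1
    calc ((1/2-δ))^(s+2) * (((s+2).factorial : ℝ) * (((n-1).choose (s+2) : ℕ) : ℝ))
        ≤ ((1/2-δ))^(s+2) * (n:ℝ)^(s+2) :=
          mul_le_mul_of_nonneg_left (h1.trans h2) (by positivity)
      _ = ((1/2-δ)*n)^(s+2) := (mul_pow _ _ _).symm
  have hFactS : ((s+2).factorial : ℝ) = ((s:ℝ)+2) * ((s+1).factorial : ℝ) := by
    rw [show s+2 = (s+1)+1 from rfl, Nat.factorial_succ]
    push_cast; ring
  rw [← mul_le_mul_iff_of_pos_right hFr]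
  calc 2 * (m:ℝ) * ((1/2-δ)^(s+2)) * (((n-1).choose (s+2) : ℕ) : ℝ) * ((s+2).factorial : ℝ)
      = 2*(m:ℝ) * ((1/2-δ)^(s+2) * (((s+2).factorial : ℝ) * (((n-1).choose (s+2) : ℕ) : ℝ))) := by
        ring
    _ ≤ 2*(m:ℝ) * ((1/2-δ)*n)^(s+2) :=
        mul_le_mul_of_nonneg_left hT (by positivity)
    _ ≤ (m:ℝ) * (((s+2).factorial:ℝ) * (a.choose (s+2):ℝ))
        + (m:ℝ) * (((s+2).factorial:ℝ) * (b.choose (s+2):ℝ))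
        + (m.choose 2:ℝ) * (((s:ℝ)+2) * (((s+1).factorial:ℝ) * (b.choose (s+1):ℝ))) := by
        have e : 2*(m:ℝ) * ((1/2-δ)*n)^(s+2) = 2 * (m:ℝ) * ((1/2-δ)*n)^(s+2) := rfl
        linarith [hcore]
    _ = ((m:ℝ) * (a.choose (s+2):ℝ) + m * (b.choose (s+2):ℝ)
        + (m.choose 2:ℝ) * (b.choose (s+1):ℝ)) * ((s+2).factorial : ℝ) := by
        rw [hFactS]; ring

theorem lemma1 (d : ℕ) (hd : 2 ≤ d) (δ : ℝ) (hδ : δ ∈ Set.Ioo (0 : ℝ) (1/2)) :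
    ∀ᶠ n : ℕ in atTop, ∀ k i j : ℕ,
      2 * k ≤ n → i ≤ k → j ≤ n - k → (i : ℝ) < δ * n → (j : ℝ) < δ * n →
      ((i : ℝ) + (j : ℝ)) * ((1 - 2 * δ) ^ (d - 1) / 2 ^ (d - 2))
          * ((n - 1).choose (d - 1) : ℝ)
        ≤ (((∑ ℓ ∈ Finset.Icc 1 (d - 1), i.choose ℓ * (k - i).choose (d - ℓ))
          + (∑ ℓ ∈ Finset.Icc 1 (d - 1), j.choose ℓ * (n - k - j).choose (d - ℓ))
          + (∑ ℓ ∈ Finset.Icc 1 (d - 1), i.choose ℓ * (n - k - j).choose (d - ℓ))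
          + (∑ ℓ ∈ Finset.Icc 1 (d - 1), (k - i).choose ℓ * j.choose (d - ℓ)) : ℕ) : ℝ) := by
  obtain ⟨hδ0, hδ2'⟩ := hδ
  have hα0 : (0:ℝ) < 1/2 - δ := by linarith
  have hevt : ∀ (cst c : ℝ), 0 < c → ∀ᶠ n : ℕ in atTop, cst ≤ c * n := by
    intro cst c hc
    exact ((tendsto_natCast_atTop_atTop (R := ℝ)).const_mul_atTop hc).eventually_ge_atTop cst
  filter_upwards [hevt (2*((d-1:ℕ):ℝ)*((d-1:ℕ):ℝ)) (1/2-δ) hα0,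
    hevt (((d-1:ℕ):ℝ) * 2^((d-1)+3)) δ hδ0,
    hevt 1 1 one_pos] with n hn1 hn2 hn3
  rw [one_mul] at hn3
  intro k i j h2k hik hjk hiδ hjδ
  have hn1' : 1 ≤ n := by exact_mod_cast hn3
  have hkn : k ≤ n := by omega
  have hacast : ((k-i:ℕ):ℝ) = (k:ℝ) - i := by
    rw [Nat.cast_sub hik]
  have hbcast : ((n-k-j:ℕ):ℝ) = (n:ℝ) - k - j := by
    rw [Nat.cast_sub hjk, Nat.cast_sub hkn]
  have hk2 : (k:ℝ) ≤ (n:ℝ)/2 := by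
    have h := (Nat.cast_le (α := ℝ)).2 h2k
    push_cast at h
    linarith
  have hbR : (1/2-δ)*(n:ℝ) < ((n-k-j:ℕ):ℝ) := by
    rw [hbcast]; linarith
  have hn1cast : ((n-1:ℕ):ℝ) = (n:ℝ) - 1 := by
    rw [Nat.cast_sub hn1']; norm_num
  rcases lt_or_ge d 3 with hd3 | hd3
  · -- case d = 2
    have hd2 : d = 2 := by omega
    subst hd2
    norm_num
    rw [hacast, hbcast, hn1cast]
    have hfac : (1-2*δ) * ((n:ℝ)-1) ≤ (n:ℝ) - i - j := by
      linarith [hiδ, hjδ, hδ2']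
    have hij0 : (0:ℝ) ≤ (i:ℝ) + j := by positivity
    have hmul := mul_le_mul_of_nonneg_left hfac hij0
    nlinarith [hmul]
  · -- case d ≥ 3
    have hmem1 : 1 ∈ Finset.Icc 1 (d-1) := by
      simp only [Finset.mem_Icc]; omega
    have hmemd : d - 1 ∈ Finset.Icc 1 (d-1) := by
      simp only [Finset.mem_Icc]; omega
    have hsub12 : ({1, 2} : Finset ℕ) ⊆ Finset.Icc 1 (d-1) := by
      intro t ht
      simp only [Finset.mem_insert, Finset.mem_singleton] at ht
      rcases ht with rfl | rfl <;> simp only [Finset.mem_Icc] <;> omega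
    have hdd1 : d - (d-1) = 1 := by omega
    -- natural-number selection of terms
    have t1 : i * ((k-i).choose (d-1))
        ≤ ∑ ℓ ∈ Finset.Icc 1 (d - 1), i.choose ℓ * (k - i).choose (d - ℓ) := by
      have h := Finset.single_le_sum
          (f := fun ℓ => i.choose ℓ * (k - i).choose (d - ℓ))
          (fun t _ => Nat.zero_le _) hmem1
      simpa [Nat.choose_one_right] using h
    have t4 : j * ((k-i).choose (d-1))
        ≤ ∑ ℓ ∈ Finset.Icc 1 (d - 1), (k - i).choose ℓ * j.choose (d - ℓ) := by
      have h := Finset.single_le_sum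
          (f := fun ℓ => (k - i).choose ℓ * j.choose (d - ℓ))
          (fun t _ => Nat.zero_le _) hmemd
      simpa [hdd1, Nat.choose_one_right, mul_comm] using h
    have t2 : j * ((n-k-j).choose (d-1)) + j.choose 2 * ((n-k-j).choose (d-2))
        ≤ ∑ ℓ ∈ Finset.Icc 1 (d - 1), j.choose ℓ * (n - k - j).choose (d - ℓ) := by
      have h := Finset.sum_le_sum_of_subset
          (f := fun ℓ => j.choose ℓ * (n - k - j).choose (d - ℓ)) hsub12
      rw [Finset.sum_pair (by norm_num : (1:ℕ) ≠ 2)] at h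
      simpa [Nat.choose_one_right] using h
    have t3 : i * ((n-k-j).choose (d-1)) + i.choose 2 * ((n-k-j).choose (d-2))
        ≤ ∑ ℓ ∈ Finset.Icc 1 (d - 1), i.choose ℓ * (n - k - j).choose (d - ℓ) := by
      have h := Finset.sum_le_sum_of_subset
          (f := fun ℓ => i.choose ℓ * (n - k - j).choose (d - ℓ)) hsub12
      rw [Finset.sum_pair (by norm_num : (1:ℕ) ≠ 2)] at h
      simpa [Nat.choose_one_right] using h
    have hNat : i * ((k-i).choose (d-1))
        + (j * ((n-k-j).choose (d-1)) + j.choose 2 * ((n-k-j).choose (d-2)))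
        + (i * ((n-k-j).choose (d-1)) + i.choose 2 * ((n-k-j).choose (d-2)))
        + j * ((k-i).choose (d-1))
        ≤ ((∑ ℓ ∈ Finset.Icc 1 (d - 1), i.choose ℓ * (k - i).choose (d - ℓ))
          + (∑ ℓ ∈ Finset.Icc 1 (d - 1), j.choose ℓ * (n - k - j).choose (d - ℓ))
          + (∑ ℓ ∈ Finset.Icc 1 (d - 1), i.choose ℓ * (n - k - j).choose (d - ℓ))
          + (∑ ℓ ∈ Finset.Icc 1 (d - 1), (k - i).choose ℓ * j.choose (d - ℓ))) := by
      omega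
    refine le_trans ?_ ((Nat.cast_le (α := ℝ)).2 hNat)
    -- per-variable claims
    have hr2 : 2 ≤ d - 1 := by omega
    have hd11 : d - 1 - 1 = d - 2 := by omega
    have habi : (1 - δ) * (n:ℝ) - i < ((k-i:ℕ):ℝ) + ((n-k-j:ℕ):ℝ) := by
      rw [hacast, hbcast]; linarith
    have habj : (1 - δ) * (n:ℝ) - j < ((k-i:ℕ):ℝ) + ((n-k-j:ℕ):ℝ) := by
      rw [hacast, hbcast]; linarith
    have hci := claimC (d-1) hr2 δ hδ0 hδ2' n (k-i) (n-k-j) i hn1 hn2 hiδ hbR habi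
    have hcj := claimC (d-1) hr2 δ hδ0 hδ2' n (k-i) (n-k-j) j hn1 hn2 hjδ hbR habj
    rw [hd11] at hci hcj
    have hcoef : (1-2*δ)^(d-1)/2^(d-2) = 2*(1/2-δ)^(d-1) := by
      obtain ⟨t, rfl⟩ : ∃ t, d = t+3 := ⟨d-3, by omega⟩
      have e1 : t+3-1 = t+2 := by omega
      have e2 : t+3-2 = t+1 := by omega
      rw [e1, e2]
      have e : (1-2*δ) = 2*(1/2-δ) := by ring
      rw [e, mul_pow]
      have h2 : (2:ℝ)^(t+2) = 2^(t+1)*2 := by ring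
      rw [h2]
      field_simp
    rw [hcoef]
    push_cast
    linarith [hci, hcj]
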